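/- Let A be a domain with fraction field K and let δ be an exponential map on A^[n] over A. Let δ_K be the induced exponential map on K^[n] obtained by localizing at S = A∖{0}. If rank(δ) = rank(δ_K) and δ_K is rigid, then δ is rigid. -/

import Mathlib

open Polynomial

/-- An *exponential map* on a commutative ring `B` over `A`: an `A`-algebra homomorphism
`δ : B → B[t]` such that evaluation at `t = 0` is the identity and
`δ_s ∘ δ_t = δ_{s+t}` (the co-associativity / iterativity condition). -/
structure ExpMap (A : Type*) (B : Type*) [CommRing A] [CommRing B] [Algebra A B] where
  toFun : B →ₐ[A] Polynomial B
  eval_zero : ∀ b : B, (toFun b).eval 0 = b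
  coassoc : ∀ b : B,
    (toFun b).map (toFun.toRingHom) =
      (toFun b).eval₂ (Polynomial.C.comp Polynomial.C)
        (Polynomial.C Polynomial.X + Polynomial.X)

namespace ExpMap

variable {A B : Type*} [CommRing A] [CommRing B] [Algebra A B]

/-- The ring of invariants `B^δ = {x ∈ B | δ(x) = x}`. -/
def invariants (δ : ExpMap A B) : Subalgebra A B where
  carrier := {x : B | δ.toFun x = Polynomial.C x}
  mul_mem' := by
    intro a b ha hb
    simp only [Set.mem_setOf_eq] at *
    rw [map_mul, ha, hb, ← map_mul]
  add_mem' := by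
    intro a b ha hb
    simp only [Set.mem_setOf_eq] at *
    rw [map_add, ha, hb, ← map_add]
  algebraMap_mem' := by
    intro r
    simp only [Set.mem_setOf_eq, AlgHom.commutes, Polynomial.algebraMap_apply]

/-- `δ` is non-trivial if `B^δ ≠ B`. -/
def IsNontrivial (δ : ExpMap A B) : Prop := δ.invariants ≠ ⊤

/-- The iterative higher derivations attached to `δ`: `δ(x) = Σ (D i x) tⁱ`. -/
noncomputable def D (δ : ExpMap A B) (i : ℕ) (x : B) : B := (δ.toFun x).coeff i

/-- A *local slice* of `δ`: an element whose image under `δ` has minimal positive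
`t`-degree. -/
def IsLocalSlice (δ : ExpMap A B) (x : B) : Prop :=
  0 < (δ.toFun x).natDegree ∧
    ∀ y : B, 0 < (δ.toFun y).natDegree → (δ.toFun x).natDegree ≤ (δ.toFun y).natDegree

/-- A *slice* of `δ`: a local slice `x` such that `D n x` is a unit, where
`n = deg_t δ(x)`. -/
def IsSlice (δ : ExpMap A B) (x : B) : Prop :=
  δ.IsLocalSlice x ∧ IsUnit ((δ.toFun x).coeff (δ.toFun x).natDegree)

end ExpMap

/-- `X : Fin n → B` is a *coordinate system* of `B` over `A`, i.e. `B = A[X₁, …, Xₙ]`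
is a polynomial ring in the `n` variables `X₁, …, Xₙ` over `A`. -/
def IsCoordSystem (A : Type*) {B : Type*} [CommRing A] [CommRing B] [Algebra A B]
    {n : ℕ} (X : Fin n → B) : Prop :=
  Function.Bijective (MvPolynomial.aeval (R := A) X)

namespace ExpMap

variable {A B : Type*} [CommRing A] [CommRing B] [Algebra A B]

/-- The *rank* of an exponential map `δ` on `B = A^[n]`: the least `r` such that some
coordinate system `{X₁, …, Xₙ}` satisfies `A[X₁, …, X_{n-r}] ⊆ B^δ`. -/
noncomputable def rank (δ : ExpMap A B) (n : ℕ) : ℕ :=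
  sInf {r : ℕ | ∃ X : Fin n → B, IsCoordSystem A X ∧
    Algebra.adjoin A (X '' {i : Fin n | (i : ℕ) < n - r}) ≤ δ.invariants}

/-- `X ∈ Γ_δ(B)`: a coordinate system with `A[X₁, …, X_{n-r}] ⊆ B^δ` where `r = rank δ`. -/
def InGamma (δ : ExpMap A B) {n : ℕ} (X : Fin n → B) : Prop :=
  IsCoordSystem A X ∧
    Algebra.adjoin A (X '' {i : Fin n | (i : ℕ) < n - δ.rank n}) ≤ δ.invariants

/-- `δ` is *rigid* if the subring `A[X₁, …, X_{n-r}]` does not depend on the choice of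
`{X₁, …, Xₙ} ∈ Γ_δ(B)`. -/
def IsRigid (δ : ExpMap A B) (n : ℕ) : Prop :=
  ∀ X X' : Fin n → B, δ.InGamma X → δ.InGamma X' →
    Algebra.adjoin A (X '' {i : Fin n | (i : ℕ) < n - δ.rank n}) =
      Algebra.adjoin A (X' '' {i : Fin n | (i : ℕ) < n - δ.rank n})

/-- `δ` is *triangular with respect to the coordinate system `X`* over `A`. -/
def IsTriangularWith (δ : ExpMap A B) {n : ℕ} (X : Fin n → B) : Prop :=
  IsCoordSystem A X ∧
    (∀ i : Fin n, ∀ j : ℕ, 0 < j →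
      (δ.toFun (X i)).coeff j ∈ Algebra.adjoin A (X '' {l : Fin n | (l : ℕ) < (i : ℕ)})) ∧
    (∀ i : Fin n, δ.toFun (X i) ≠ Polynomial.C (X i) →
      (∀ l : Fin n, (l : ℕ) < (i : ℕ) → δ.toFun (X l) = Polynomial.C (X l)) →
      δ.IsLocalSlice (X i))

/-- `δ` is *triangular* over `A` (in `n` variables). -/
def IsTriangular (δ : ExpMap A B) (n : ℕ) : Prop :=
  ∃ X : Fin n → B, δ.IsTriangularWith X

/-- `δ` is *triangular over the subring `R`* of `B` (with `B = R^[m]`). -/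
def IsTriangularOver (δ : ExpMap A B) (R : Subalgebra A B) (m : ℕ) : Prop :=
  ∃ X : Fin m → B,
    Function.Bijective (MvPolynomial.aeval (R := ↥R) X) ∧
    (∀ i : Fin m, ∀ j : ℕ, 0 < j →
      (δ.toFun (X i)).coeff j ∈ Algebra.adjoin (↥R) (X '' {l : Fin m | (l : ℕ) < (i : ℕ)})) ∧
    (∀ i : Fin m, δ.toFun (X i) ≠ Polynomial.C (X i) →
      (∀ l : Fin m, (l : ℕ) < (i : ℕ) → δ.toFun (X l) = Polynomial.C (X l)) →
      δ.IsLocalSlice (X i))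

end ExpMap

section Aux

attribute [local instance] MvPolynomial.algebraMvPolynomial

variable {A K B B' : Type*} [CommRing A] [IsDomain A] [Field K] [Algebra A K]
    [IsFractionRing A K] [CommRing B] [IsDomain B] [Algebra A B]
    [CommRing B'] [IsDomain B'] [Algebra K B'] [Algebra A B'] [Algebra B B']
    [IsScalarTower A K B'] [IsScalarTower A B B']
    [IsLocalization (Algebra.algebraMapSubmonoid B (nonZeroDivisors A)) B']

theorem aux_finj (hAB : Function.Injective (algebraMap A B)) :
    Function.Injective (algebraMap B B') := by
  apply IsLocalization.injective B'
    (M := Algebra.algebraMapSubmonoid B (nonZeroDivisors A))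
  rintro x ⟨a, ha, rfl⟩
  refine mem_nonZeroDivisors_of_ne_zero fun h0 => ?_
  exact nonZeroDivisors.ne_zero ha (hAB (by simpa using h0))

theorem aux_comm {n : ℕ} (X : Fin n → B) (p : MvPolynomial (Fin n) A) :
    MvPolynomial.aeval (fun i => algebraMap B B' (X i)) (MvPolynomial.map (algebraMap A K) p)
      = algebraMap B B' (MvPolynomial.aeval X p) := by
  rw [MvPolynomial.aeval_map_algebraMap]
  have := (MvPolynomial.comp_aeval_apply (f := X) (IsScalarTower.toAlgHom A B B') p).symm
  simpa using this

theorem aux_coord (hAB : Function.Injective (algebraMap A B)) {n : ℕ} {X : Fin n → B}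
    (hX : IsCoordSystem A X) :
    IsCoordSystem K (fun i => algebraMap B B' (X i)) := by
  have key : ∀ q : MvPolynomial (Fin n) K,
      MvPolynomial.aeval (fun i => algebraMap B B' (X i)) q = 0 → q = 0 := by
    intro q hq
    obtain ⟨⟨p, s⟩, hs⟩ := IsLocalization.surj
      ((nonZeroDivisors A).map (MvPolynomial.C (σ := Fin n))) q
    obtain ⟨a, ha, hc⟩ := s.2
    have h2 := congrArg (MvPolynomial.aeval (fun i => algebraMap B B' (X i))) hs
    rw [map_mul, hq, zero_mul, MvPolynomial.algebraMap_def, aux_comm] at h2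
    have hp : MvPolynomial.aeval X p = 0 :=
      aux_finj hAB (h2.symm.trans (map_zero (algebraMap B B')).symm)
    have hp0 : p = 0 := hX.injective (by rw [hp, map_zero])
    rw [hp0, map_zero] at hs
    have hs0 : (algebraMap (MvPolynomial (Fin n) A) (MvPolynomial (Fin n) K)) (↑s) ≠ 0 := by
      rw [MvPolynomial.algebraMap_def, ← hc, MvPolynomial.map_C]
      simp only [ne_eq, MvPolynomial.C_eq_zero]
      exact IsFractionRing.to_map_ne_zero_of_mem_nonZeroDivisors ha
    exact (mul_eq_zero.mp hs).resolve_right hs0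
  constructor
  · intro q₁ q₂ h
    have : q₁ - q₂ = 0 := key _ (by rw [map_sub, h, sub_self])
    exact sub_eq_zero.mp this
  · intro b'
    obtain ⟨⟨b, s⟩, hs⟩ := IsLocalization.surj
      (Algebra.algebraMapSubmonoid B (nonZeroDivisors A)) b'
    obtain ⟨a, ha, hc⟩ := s.2
    obtain ⟨p, rfl⟩ := hX.surjective b
    have ha' : algebraMap A K a ≠ 0 :=
      IsFractionRing.to_map_ne_zero_of_mem_nonZeroDivisors ha
    refine ⟨MvPolynomial.map (algebraMap A K) p *
      MvPolynomial.C (algebraMap A K a)⁻¹, ?_⟩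
    rw [map_mul, aux_comm, MvPolynomial.aeval_C, ← hs, ← hc]
    have htow : algebraMap B B' (algebraMap A B a) = algebraMap K B' (algebraMap A K a) := by
      rw [← IsScalarTower.algebraMap_apply, ← IsScalarTower.algebraMap_apply]
    rw [htow, mul_assoc, ← map_mul, mul_inv_cancel₀ ha', map_one, mul_one]

theorem aux_mem (hAB : Function.Injective (algebraMap A B)) {n : ℕ} {X : Fin n → B}
    (hX : IsCoordSystem A X) (S : Set (Fin n)) (x : B)
    (hx : algebraMap B B' x ∈
      Algebra.adjoin K ((fun i => algebraMap B B' (X i)) '' S)) :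
    x ∈ Algebra.adjoin A (X '' S) := by
  obtain ⟨p, rfl⟩ := hX.surjective x
  have hψinj : Function.Injective
      (MvPolynomial.aeval (R := K) (fun i => algebraMap B B' (X i))) :=
    (aux_coord hAB hX).injective
  have himg : (fun i => algebraMap B B' (X i)) '' S =
      (MvPolynomial.aeval (R := K) (fun i => algebraMap B B' (X i))) ''
        (MvPolynomial.X '' S) := by
    rw [Set.image_image]
    simp
  rw [himg, ← AlgHom.map_adjoin] at hx
  rw [← aux_comm (K := K) (B' := B') X p] at hx
  obtain ⟨q, hq, hq2⟩ := hx
  have hmq : q = MvPolynomial.map (algebraMap A K) p := hψinj hq2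
  subst hmq
  have hsupp : MvPolynomial.map (algebraMap A K) p ∈ MvPolynomial.supported K S := hq
  rw [MvPolynomial.mem_supported,
    MvPolynomial.vars_map_of_injective p (IsFractionRing.injective A K)] at hsupp
  have hpsupp : p ∈ MvPolynomial.supported A S := MvPolynomial.mem_supported.mpr hsupp
  have hmap := AlgHom.map_adjoin (MvPolynomial.aeval (R := A) X)
    (MvPolynomial.X '' S : Set (MvPolynomial (Fin n) A))
  have : MvPolynomial.aeval X p ∈
      (Algebra.adjoin A (MvPolynomial.X '' S : Set (MvPolynomial (Fin n) A))).map
        (MvPolynomial.aeval (R := A) X) := ⟨p, hpsupp, rfl⟩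
  rw [hmap] at this
  have himg2 : (MvPolynomial.aeval (R := A) X) '' (MvPolynomial.X '' S) = X '' S := by
    rw [Set.image_image]
    simp
  rwa [himg2] at this

end Aux

theorem mem_invariants_iff {A B : Type*} [CommRing A] [CommRing B] [Algebra A B]
    (δ : ExpMap A B) (x : B) : x ∈ δ.invariants ↔ δ.toFun x = Polynomial.C x :=
  Iff.rfl

/-- Let `A` be a domain with fraction field `K`, `δ ∈ EXP_A(A^[n])`, and
`δ_K ∈ EXP(K^[n])` the induced exponential map obtained by localizing at `S = A∖{0}`.
If `rank δ = rank δ_K` and `δ_K` is rigid, then `δ` is rigid. -/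
theorem rigid_of_rigid_over_fractions
    {A K B B' : Type*} [CommRing A] [IsDomain A] [Field K] [Algebra A K]
    [IsFractionRing A K] [CommRing B] [IsDomain B] [Algebra A B]
    [CommRing B'] [IsDomain B'] [Algebra K B'] [Algebra A B'] [Algebra B B']
    [IsScalarTower A K B'] [IsScalarTower A B B']
    [IsLocalization (Algebra.algebraMapSubmonoid B (nonZeroDivisors A)) B']
    (hAB : Function.Injective (algebraMap A B))
    {n : ℕ} (hB : ∃ X : Fin n → B, IsCoordSystem A X)
    (δ : ExpMap A B) (δK : ExpMap K B')
    (hcompat : ∀ b : B,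
      δK.toFun (algebraMap B B' b) = (δ.toFun b).map (algebraMap B B'))
    (hrank : δ.rank n = δK.rank n) (hrigid : δK.IsRigid n) :
    δ.IsRigid n := by
  intro X X' hX hX'
  set S : Set (Fin n) := {i : Fin n | (i : ℕ) < n - δ.rank n} with hS
  have hSK : {i : Fin n | (i : ℕ) < n - δK.rank n} = S := by rw [hS, ← hrank]
  have hGamma : ∀ Z : Fin n → B, δ.InGamma Z →
      δK.InGamma (fun i => algebraMap B B' (Z i)) := by
    intro Z hZ
    refine ⟨aux_coord hAB hZ.1, ?_⟩
    rw [hSK]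
    apply Algebra.adjoin_le
    rintro y ⟨i, hi, rfl⟩
    have hinv : δ.toFun (Z i) = Polynomial.C (Z i) :=
      (mem_invariants_iff δ (Z i)).mp (hZ.2 (Algebra.subset_adjoin ⟨i, hi, rfl⟩))
    exact (mem_invariants_iff δK _).mpr (by rw [hcompat, hinv, Polynomial.map_C])
  have heq := hrigid _ _ (hGamma X hX) (hGamma X' hX')
  rw [hSK] at heq
  have hfwd : ∀ Z : Fin n → B, ∀ x ∈ Algebra.adjoin A (Z '' S),
      algebraMap B B' x ∈ Algebra.adjoin K ((fun i => algebraMap B B' (Z i)) '' S) := by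
    intro Z x hx
    have hle : Algebra.adjoin A (Z '' S) ≤
        ((Algebra.adjoin K ((fun i => algebraMap B B' (Z i)) '' S)).restrictScalars A).comap
          (IsScalarTower.toAlgHom A B B') := by
      apply Algebra.adjoin_le
      rintro y ⟨i, hi, rfl⟩
      show algebraMap B B' (Z i) ∈ Algebra.adjoin K _
      exact Algebra.subset_adjoin ⟨i, hi, rfl⟩
    exact hle hx
  apply le_antisymm
  · intro x hx
    exact aux_mem hAB hX'.1 S x (heq ▸ hfwd X x hx)
  · intro x hx
    exact aux_mem hAB hX.1 S x (heq ▸ hfwd X' x hx)
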